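/- For all words u, v over a nonempty finite alphabet A, ρ(u·v) ≤ ρ(u) + ρ(v). -/

import Mathlib

/-- Simon's congruence of order `k`: `u` and `v` have the same subwords
(subsequences) of length at most `k`. -/
def SimonCong {A : Type*} (k : ℕ) (u v : List A) : Prop :=
  ∀ s : List A, s.length ≤ k → (s.Sublist u ↔ s.Sublist v)

/-- The subword distance `δ(u,v) = sup {k | u ∼ₖ v} ∈ ℕ ∪ {∞}`. -/
noncomputable def delta {A : Type*} (u v : List A) : ℕ∞ :=
  ⨆ k ∈ {k : ℕ | SimonCong k u v}, (k : ℕ∞)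

/-- Right side distance `r(u,t) = δ(u, u·t)`. -/
noncomputable def sideR {A : Type*} (u t : List A) : ℕ∞ :=
  delta u (u ++ t)

/-- Left side distance `ℓ(t,u) = δ(t·u, u)`. -/
noncomputable def sideL {A : Type*} (t u : List A) : ℕ∞ :=
  delta (t ++ u) u

/-- The piecewise complexity `h(u)`: the least `n` such that every word
`v` with `u ∼ₙ v` equals `u`. -/
noncomputable def pieceH {A : Type*} (u : List A) : ℕ :=
  sInf {n : ℕ | ∀ v : List A, SimonCong n u v → v = u}

/-- A word `u` is `m`-reduced if no strict subword of `u` is `∼ₘ`-equivalent to `u`. -/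
def MReduced {A : Type*} (m : ℕ) (u : List A) : Prop :=
  ∀ u' : List A, u'.Sublist u → u' ≠ u → ¬ SimonCong m u' u

/-- The piecewise minimality index `ρ(u)`: the least `m` such that `u` is `m`-reduced. -/
noncomputable def rho {A : Type*} (u : List A) : ℕ :=
  sInf {m : ℕ | MReduced m u}


open List

/-- Extract a distinguishing subword from a failure of Simon congruence between
a word and one of its subwords. -/
lemma exists_witness {A : Type*} {k : ℕ} {a b : List A} (hab : a <+ b)
    (h : ¬ SimonCong k a b) : ∃ s : List A, s.length ≤ k ∧ s <+ b ∧ ¬ s <+ a := by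
  unfold SimonCong at h
  push_neg at h
  obtain ⟨s, hs_len, hs_iff⟩ := h
  rcases hs_iff with ⟨h1, h2⟩ | ⟨h1, h2⟩
  · exact absurd (h1.trans hab) h2
  · exact ⟨s, hs_len, h2, h1⟩

lemma mreduced_length {A : Type*} (u : List A) : MReduced u.length u := by
  intro u' hsub hne hcong
  have h1 : u <+ u' := (hcong u le_rfl).mpr (List.Sublist.refl u)
  exact hne (hsub.eq_of_length_le h1.length_le)

lemma mreduced_rho {A : Type*} (u : List A) : MReduced (rho u) u := by
  have hne : {m : ℕ | MReduced m u}.Nonempty := ⟨u.length, mreduced_length u⟩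
  have := Nat.sInf_mem hne
  exact this

lemma simonCong_reverse {A : Type*} {k : ℕ} {a b : List A} (h : SimonCong k a b) :
    SimonCong k a.reverse b.reverse := by
  intro s hs
  constructor
  · intro hsa
    have : s.reverse <+ a := by simpa using hsa.reverse
    have := (h s.reverse (by simpa using hs)).mp this
    simpa using this.reverse
  · intro hsb
    have : s.reverse <+ b := by simpa using hsb.reverse
    have := (h s.reverse (by simpa using hs)).mpr this
    simpa using this.reverse

lemma mreduced_reverse {A : Type*} {m : ℕ} {u : List A} (h : MReduced m u) :
    MReduced m u.reverse := by
  intro w hsub hne hcong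
  refine h w.reverse (by simpa using hsub.reverse)
    (fun he => hne (by rw [← he, List.reverse_reverse])) ?_
  have := simonCong_reverse hcong
  simpa using this

lemma cons_sublist_tail {A : Type*} {c : A} {t v : List A} (h : (c :: t) <+ v)
    (hv : v ≠ []) : t <+ v.tail := by
  cases v with
  | nil => exact absurd rfl hv
  | cons x xs =>
    cases h with
    | cons _ h' => exact (List.sublist_cons_self c t).trans h'
    | cons_cons _ h' => exact h'

/-- Key lemma: if `u` is `m`-reduced and `v` is `n`-reduced, `u' ⊑ u` strictly,
`v' ⊑ v`, then `u' ++ v'` is not `∼_{m+n}` to `u ++ v`. -/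
lemma key {A : Type*} {m n : ℕ} {u v u' v' : List A}
    (hu : MReduced m u) (hv : MReduced n v)
    (hu' : u' <+ u) (hne : u' ≠ u) (hv' : v' <+ v) :
    ¬ SimonCong (m + n) (u' ++ v') (u ++ v) := by
  intro h
  obtain ⟨s, hs_len, hs_u, hs_nu'⟩ := exists_witness hu' (hu u' hu' hne)
  by_cases hvnil : v = []
  · subst hvnil
    have hv'nil : v' = [] := List.sublist_nil.mp hv'
    subst hv'nil
    have h1 : s <+ u ++ [] := by simpa using hs_u
    have h2 : s <+ u' ++ [] := (h s (le_trans hs_len (Nat.le_add_right m n))).mpr h1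
    exact hs_nu' (by simpa using h2)
  · have htail_ne : v.tail ≠ v := by
      intro he
      have := congrArg List.length he
      cases v with
      | nil => exact hvnil rfl
      | cons x xs => simp at this
    obtain ⟨t, ht_len, ht_v, ht_ntail⟩ :=
      exists_witness (List.tail_sublist v) (hv v.tail (List.tail_sublist v) htail_ne)
    have hst_uv : (s ++ t) <+ u ++ v := hs_u.append ht_v
    have hst_len : (s ++ t).length ≤ m + n := by
      simp only [List.length_append]
      exact Nat.add_le_add hs_len ht_len
    have hst : (s ++ t) <+ u' ++ v' := (h (s ++ t) hst_len).mpr hst_uv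
    obtain ⟨α, β, heq, hα, hβ⟩ := List.sublist_append_iff.mp hst
    rcases List.append_eq_append_iff.mp heq with ⟨a', ha1, _⟩ | ⟨c', hc1, hc2⟩
    · exact hs_nu' ((List.sublist_append_left s a').trans (ha1 ▸ hα))
    · cases c' with
      | nil =>
        simp at hc1
        exact hs_nu' (hc1 ▸ hα)
      | cons c cs =>
        have hct : (c :: t) <+ β := by
          rw [hc2]
          exact ((List.singleton_sublist.mpr (List.mem_cons_self (a := c) (l := cs))).append
            (List.Sublist.refl t))
        have hctv : (c :: t) <+ v := (hct.trans hβ).trans hv'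
        exact ht_ntail (cons_sublist_tail hctv hvnil)

theorem stmt10 {A : Type*} [Fintype A] [Nonempty A] (u v : List A) :
    rho (u ++ v) ≤ rho u + rho v := by
  have hu := mreduced_rho u
  have hv := mreduced_rho v
  have hred : MReduced (rho u + rho v) (u ++ v) := by
    intro w hsub hne hcong
    obtain ⟨u', v', rfl, hu', hv'⟩ := List.sublist_append_iff.mp hsub
    by_cases hcase : u' = u
    · subst hcase
      have hvne : v' ≠ v := fun he => hne (by rw [he])
      have hrev : SimonCong (rho v + rho u')
          (v'.reverse ++ u'.reverse) (v.reverse ++ u'.reverse) := by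
        have := simonCong_reverse hcong
        rw [List.reverse_append, List.reverse_append] at this
        rw [Nat.add_comm]
        exact this
      exact key (mreduced_reverse hv) (mreduced_reverse hu)
        hv'.reverse
        (fun he => hvne (by simpa using congrArg List.reverse he))
        hu'.reverse hrev
    · exact key hu hv hu' hcase hv' hcong
  exact Nat.sInf_le hred
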